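/- arXiv:1212.4129 — 6 statements merged into one kernel-verified Lean document; each statement's English description precedes it below -/
import Mathlib

section
/- For any undirected graph X and any vertex set L, the induced matching number of the extended tensor product of the complete graph K_L with X is at most the induced matching number of X: im(K_L ×_e X) ≤ im(X). -/
open SimpleGraph

def tensor {α β : Type*} (G : SimpleGraph α) (H : SimpleGraph β) :
    SimpleGraph (α × β) where
  Adj p q := G.Adj p.1 q.1 ∧ H.Adj p.2 q.2
  symm := ⟨fun p q h => ⟨h.1.symm, h.2.symm⟩⟩
  loopless := ⟨fun p h => G.loopless.irrefl p.1 h.1⟩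

def etensor {α β : Type*} (G : SimpleGraph α) (H : SimpleGraph β) :
    SimpleGraph (α × β) where
  Adj p q := (G.Adj p.1 q.1 ∨ p.1 = q.1) ∧ H.Adj p.2 q.2
  symm := ⟨fun p q h => ⟨h.1.imp (fun h' => h'.symm) (fun h' => h'.symm), h.2.symm⟩⟩
  loopless := ⟨fun p h => H.loopless.irrefl p.2 h.2⟩

def disj {α β : Type*} (G : SimpleGraph α) (H : SimpleGraph β) :
    SimpleGraph (α × β) where
  Adj p q := G.Adj p.1 q.1 ∨ H.Adj p.2 q.2
  symm := ⟨fun p q h => h.imp (fun h' => h'.symm) (fun h' => h'.symm)⟩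
  loopless := ⟨fun p h => h.elim (G.loopless.irrefl p.1) (H.loopless.irrefl p.2)⟩

def lexProd {α β : Type*} (G : SimpleGraph α) (H : SimpleGraph β) :
    SimpleGraph (α × β) where
  Adj p q := G.Adj p.1 q.1 ∨ (p.1 = q.1 ∧ H.Adj p.2 q.2)
  symm := ⟨fun p q h => h.imp (fun h' => h'.symm) (fun h' => ⟨h'.1.symm, h'.2.symm⟩)⟩
  loopless := ⟨fun p h => h.elim (G.loopless.irrefl p.1) (fun h' => H.loopless.irrefl p.2 h'.2)⟩

def disjPow {α : Type*} (G : SimpleGraph α) (k : ℕ) : SimpleGraph (Fin k → α) where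
  Adj x y := ∃ i, G.Adj (x i) (y i)
  symm := ⟨fun x y h => h.imp (fun i hi => hi.symm)⟩
  loopless := ⟨fun x h => h.elim (fun i hi => G.loopless.irrefl (x i) hi)⟩

def lexPow {α : Type*} (G : SimpleGraph α) (k : ℕ) : SimpleGraph (Fin k → α) where
  Adj x y := ∃ i, G.Adj (x i) (y i) ∧ ∀ j, j < i → x j = y j
  symm := ⟨fun x y h => h.imp (fun i hi => ⟨hi.1.symm, fun j hj => (hi.2 j hj).symm⟩)⟩
  loopless := ⟨fun x h => h.elim (fun i hi => G.loopless.irrefl (x i) hi.1)⟩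

def IsIndMatching {V : Type*} (G : SimpleGraph V) {n : ℕ} (a b : Fin n → V) : Prop :=
  (∀ i, G.Adj (a i) (b i)) ∧
  ∀ i j, i ≠ j → ¬ G.Adj (a i) (a j) ∧ ¬ G.Adj (a i) (b j) ∧ ¬ G.Adj (b i) (b j)

noncomputable def imNum {V : Type*} (G : SimpleGraph V) : ℕ :=
  sSup {n | ∃ a b : Fin n → V, IsIndMatching G a b}

def SemiCond {V : Type*} (G : SimpleGraph V) (σ : V → ℕ) (u u' v v' : V) : Prop :=
  σ u < σ u' → σ u < σ v → σ v < σ v' → ¬ G.Adj u v ∧ ¬ G.Adj u v'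

def IsSemiIndMatching {V : Type*} (G : SimpleGraph V) (σ : V → ℕ) {n : ℕ}
    (a b : Fin n → V) : Prop :=
  (∀ i, G.Adj (a i) (b i)) ∧
  (∀ i j, i ≠ j → a i ≠ a j ∧ a i ≠ b j ∧ b i ≠ b j) ∧
  (∀ i j, i ≠ j →
    SemiCond G σ (a i) (b i) (a j) (b j) ∧ SemiCond G σ (a i) (b i) (b j) (a j) ∧
    SemiCond G σ (b i) (a i) (a j) (b j) ∧ SemiCond G σ (b i) (a i) (b j) (a j))

noncomputable def simNumOrd {V : Type*} (G : SimpleGraph V) (σ : V → ℕ) : ℕ :=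
  sSup {n | ∃ a b : Fin n → V, IsSemiIndMatching G σ a b}

noncomputable def simNum {V : Type*} (G : SimpleGraph V) : ℕ :=
  sSup {n | ∃ σ : V → ℕ, Function.Injective σ ∧
    ∃ a b : Fin n → V, IsSemiIndMatching G σ a b}

noncomputable def indepNum {V : Type*} (G : SimpleGraph V) : ℕ :=
  sSup {n | ∃ s : Finset V, s.card = n ∧ ∀ u ∈ s, ∀ v ∈ s, ¬ G.Adj u v}

noncomputable def chromNum {V : Type*} (G : SimpleGraph V) : ℕ :=
  sInf {n | G.Colorable n}

def vecLT {d : ℕ} (x y : Fin d → ℝ) : Prop := (∀ i, x i ≤ y i) ∧ ∃ i, x i < y i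

def Realizes {V : Type*} (R : V → V → Prop) {d : ℕ} (φ : V → Fin d → ℝ) : Prop :=
  ∀ u v, u ≠ v → (R u v ↔ vecLT (φ u) (φ v))

noncomputable def posetDim {V : Type*} (R : V → V → Prop) : ℕ :=
  sInf {d | ∃ φ : V → Fin d → ℝ, Realizes R φ}

def IsHeightTwoPoset {V : Type*} (R : V → V → Prop) : Prop :=
  (∀ u, ¬ Relation.TransGen R u u) ∧
  (∀ u v w, R u v → R v w → R u w) ∧
  (∀ u, (∀ v, ¬ R v u) ∨ (∀ v, ¬ R u v))

def etensorRel {α β : Type*} (G : SimpleGraph α) (R : β → β → Prop) :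
    α × β → α × β → Prop :=
  fun p q => (G.Adj p.1 q.1 ∨ p.1 = q.1) ∧ R p.2 q.2

def tensorRel {α β : Type*} (G : SimpleGraph α) (R : β → β → Prop) :
    α × β → α × β → Prop :=
  fun p q => G.Adj p.1 q.1 ∧ R p.2 q.2

def K2dir : Fin 2 → Fin 2 → Prop := fun i j => i = 0 ∧ j = 1

theorem stmt1 {L V : Type*} [Fintype L] [Fintype V] (X : SimpleGraph V) :
    imNum (etensor (⊤ : SimpleGraph L) X) ≤ imNum X := by
  have key : ∀ p q : L × V, X.Adj p.2 q.2 → (etensor (⊤ : SimpleGraph L) X).Adj p q := by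
    intro p q h
    refine ⟨?_, h⟩
    by_cases hpq : p.1 = q.1
    · exact Or.inr hpq
    · exact Or.inl hpq
  have hproj : ∀ n, (∃ a b : Fin n → L × V,
      IsIndMatching (etensor (⊤ : SimpleGraph L) X) a b) →
      ∃ a b : Fin n → V, IsIndMatching X a b := by
    rintro n ⟨a, b, h1, h2⟩
    refine ⟨fun i => (a i).2, fun i => (b i).2, fun i => (h1 i).2, fun i j hij => ?_⟩
    have h := h2 i j hij
    exact ⟨fun hc => h.1 (key _ _ hc), fun hc => h.2.1 (key _ _ hc),
      fun hc => h.2.2 (key _ _ hc)⟩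
  unfold imNum
  refine csSup_le ⟨0, ?_⟩ ?_
  · exact ⟨fun i => i.elim0, fun i => i.elim0, fun i => i.elim0, fun i j _ => i.elim0⟩
  intro n hn
  apply le_csSup
  · refine ⟨Fintype.card V, fun m hm => ?_⟩
    obtain ⟨a, b, h1, h2⟩ := hm
    have hinj : Function.Injective a := by
      intro i j hij
      by_contra h
      exact ((h2 i j h).2.1 (hij ▸ h1 j))
    exact Fintype.card_fin m ▸ Fintype.card_le_of_injective a hinj
  exact hproj n hn
end

section
/- For any undirected graphs G, H, and J, the induced matching number is subadditive over the disjunctive product: im((G ∨ H) × J) ≤ im(G × J) + im(H × J). -/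
open SimpleGraph

lemma IsIndMatching.a_inj {V : Type*} {G : SimpleGraph V} {n : ℕ} {a b : Fin n → V}
    (h : IsIndMatching G a b) : Function.Injective a := by
  intro i j hij
  by_contra hne
  exact (h.2 i j hne).2.1 (hij ▸ (h.1 j))

lemma imNum_bddAbove {V : Type*} [Fintype V] (G : SimpleGraph V) :
    BddAbove {n | ∃ a b : Fin n → V, IsIndMatching G a b} := by
  refine ⟨Fintype.card V, ?_⟩
  rintro n ⟨a, b, h⟩
  simpa using Fintype.card_le_of_injective a h.a_inj

lemma le_imNum {V : Type*} [Fintype V] (G : SimpleGraph V) {n : ℕ}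
    (a b : Fin n → V) (h : IsIndMatching G a b) : n ≤ imNum G :=
  le_csSup (imNum_bddAbove G) ⟨a, b, h⟩

theorem stmt2 {α β γ : Type*} [Fintype α] [Fintype β] [Fintype γ]
    (G : SimpleGraph α) (H : SimpleGraph β) (J : SimpleGraph γ) :
    imNum (tensor (disj G H) J) ≤ imNum (tensor G J) + imNum (tensor H J) := by
  classical
  refine csSup_le' ?_
  rintro n ⟨a, b, hm⟩
  set S : Finset (Fin n) := Finset.univ.filter
    (fun i => G.Adj (a i).1.1 (b i).1.1) with hS
  have keyG : S.card ≤ imNum (tensor G J) := by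
    set e : Fin S.card → {x // x ∈ S} := fun i => S.equivFin.symm i
    refine le_imNum _ (fun i => ((a (e i)).1.1, (a (e i)).2))
      (fun i => ((b (e i)).1.1, (b (e i)).2)) ⟨?_, ?_⟩
    · intro i
      have hmem : (e i : Fin n) ∈ S := (e i).2
      simp only [hS, Finset.mem_filter, Finset.mem_univ, true_and] at hmem
      exact ⟨hmem, (hm.1 (e i)).2⟩
    · intro i j hij
      have hne : (e i : Fin n) ≠ (e j : Fin n) := by
        intro h'
        exact hij (S.equivFin.symm.injective (Subtype.ext h'))
      have h2 := hm.2 _ _ hne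
      refine ⟨?_, ?_, ?_⟩
      · rintro ⟨h1, hJ⟩; exact h2.1 ⟨Or.inl h1, hJ⟩
      · rintro ⟨h1, hJ⟩; exact h2.2.1 ⟨Or.inl h1, hJ⟩
      · rintro ⟨h1, hJ⟩; exact h2.2.2 ⟨Or.inl h1, hJ⟩
  have keyH : Sᶜ.card ≤ imNum (tensor H J) := by
    set e : Fin Sᶜ.card → {x // x ∈ Sᶜ} := fun i => Sᶜ.equivFin.symm i
    refine le_imNum _ (fun i => ((a (e i)).1.2, (a (e i)).2))
      (fun i => ((b (e i)).1.2, (b (e i)).2)) ⟨?_, ?_⟩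
    · intro i
      have hmem : (e i : Fin n) ∈ Sᶜ := (e i).2
      simp only [Finset.mem_compl, hS, Finset.mem_filter, Finset.mem_univ, true_and] at hmem
      have hadj := hm.1 (e i)
      refine ⟨hadj.1.resolve_left hmem, hadj.2⟩
    · intro i j hij
      have hne : (e i : Fin n) ≠ (e j : Fin n) := by
        intro h'
        exact hij (Sᶜ.equivFin.symm.injective (Subtype.ext h'))
      have h2 := hm.2 _ _ hne
      refine ⟨?_, ?_, ?_⟩
      · rintro ⟨h1, hJ⟩; exact h2.1 ⟨Or.inr h1, hJ⟩
      · rintro ⟨h1, hJ⟩; exact h2.2.1 ⟨Or.inr h1, hJ⟩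
      · rintro ⟨h1, hJ⟩; exact h2.2.2 ⟨Or.inr h1, hJ⟩
  have hcard : S.card + Sᶜ.card = n := by
    simp [S.card_add_card_compl]
  calc n = S.card + Sᶜ.card := hcard.symm
    _ ≤ _ := Nat.add_le_add keyG keyH
end

section
/- Let A be an undirected graph and let U, V be disjoint vertex sets. Let K_{U,V} be the complete height-two poset with minimal elements U and maximal elements V (edges uv for all u ∈ U, v ∈ V), and let K⃗_2 be the poset with one edge from a minimal vertex to a maximal vertex. Then dim(A ×_e K_{U,V}) ≤ dim(A ×_e K⃗_2). -/
open SimpleGraph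

lemma vecLT_irrefl {d : ℕ} (x : Fin d → ℝ) : ¬ vecLT x x := by
  rintro ⟨-, i, hi⟩; exact lt_irrefl _ hi

open Classical in
lemma exists_realizer {V : Type*} [Fintype V] (R : V → V → Prop)
    (hirr : ∀ u, ¬ R u u) (htrans : ∀ u v w, R u v → R v w → R u w) :
    ∃ d : ℕ, ∃ φ : V → Fin d → ℝ, Realizes R φ := by
  classical
  let e : V ≃ Fin (Fintype.card V) := Fintype.equivFin V
  refine ⟨Fintype.card V, fun v i => if R (e.symm i) v ∨ e.symm i = v then 1 else 0, ?_⟩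
  intro u v huv
  have hasym : ∀ a b, R a b → ¬ R b a := fun a b hab hba => hirr a (htrans a b a hab hba)
  constructor
  · intro hR
    constructor
    · intro i
      by_cases h : R (e.symm i) u ∨ e.symm i = u
      · have h' : R (e.symm i) v ∨ e.symm i = v := by
          rcases h with h | h
          · exact Or.inl (htrans _ _ _ h hR)
          · exact Or.inl (h ▸ hR)
        simp [h, h']
      · by_cases h' : R (e.symm i) v ∨ e.symm i = v <;> simp [h, h']
    · refine ⟨e v, ?_⟩
      have h1 : ¬ (R v u ∨ v = u) := by
        rintro (h | h)
        · exact hasym u v hR h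
        · exact huv h.symm
      simp [Equiv.symm_apply_apply, h1]
  · rintro ⟨hle, -⟩
    have := hle (e u)
    simp only [Equiv.symm_apply_apply] at this
    by_cases h' : R u v ∨ u = v
    · rcases h' with h' | h'
      · exact h'
      · exact absurd h' huv
    · simp [h'] at this
      exact absurd this (by norm_num)

theorem stmt9 {α U W : Type*} [Fintype α] [Fintype U] [Fintype W] (A : SimpleGraph α) :
    posetDim (etensorRel A
      (fun p q : U ⊕ W => (∃ u, p = Sum.inl u) ∧ (∃ w, q = Sum.inr w))) ≤
    posetDim (etensorRel A K2dir) := by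
  classical
  set S : Set ℕ := {d | ∃ φ : α × Fin 2 → Fin d → ℝ, Realizes (etensorRel A K2dir) φ}
  have hS : S.Nonempty := by
    obtain ⟨d, φ, hφ⟩ := exists_realizer (etensorRel A K2dir)
      (fun p ⟨_, h0, h1⟩ => by simp [h0] at h1)
      (fun p q r ⟨_, _, h1⟩ ⟨_, h0, _⟩ => by simp [h1] at h0)
    exact ⟨d, φ, hφ⟩
  have hmem : sInf S ∈ S := Nat.sInf_mem hS
  obtain ⟨φ, hφ⟩ := hmem
  apply Nat.sInf_le
  refine ⟨fun p => φ (p.1, Sum.elim (fun _ => (0 : Fin 2)) (fun _ => 1) p.2), ?_⟩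
  rintro ⟨a, p⟩ ⟨a', q⟩ hne
  set f : U ⊕ W → Fin 2 := Sum.elim (fun _ => (0 : Fin 2)) (fun _ => 1) with hf
  by_cases heq : (a, f p) = (a', f q)
  · have ha : a = a' := congrArg Prod.fst heq
    have hfp : f p = f q := congrArg Prod.snd heq
    constructor
    · rintro ⟨-, ⟨u, hu⟩, ⟨w, hw⟩⟩
      subst hu; subst hw
      simp [hf] at hfp
    · intro h
      have h' : vecLT (φ (a, f p)) (φ (a', f q)) := h
      rw [heq] at h'
      exact absurd h' (vecLT_irrefl _)
  · show _ ↔ vecLT (φ (a, f p)) (φ (a', f q))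
    rw [← hφ (a, f p) (a', f q) heq]
    constructor
    · rintro ⟨h1, ⟨u, hu⟩, ⟨w, hw⟩⟩
      subst hu; subst hw
      exact ⟨h1, rfl, rfl⟩
    · rintro ⟨h1, h0, h1'⟩
      refine ⟨h1, ?_, ?_⟩
      · cases p with
        | inl u => exact ⟨u, rfl⟩
        | inr w => simp [hf] at h0
      · cases q with
        | inl u => simp [hf] at h1'
        | inr w => exact ⟨w, rfl⟩
end

section
/- Let L be any vertex set, X a graph, M an induced matching of K_L ×_e X, and define M_X ⊆ E(X) to be the set of projections xy of edges (i,x)(j,y) ∈ M. Then M_X is an induced matching of X of the same size as M (the projection is injective on M). -/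
open SimpleGraph

theorem stmt17 {L V : Type*} (X : SimpleGraph V) (n : ℕ) (a b : Fin n → L × V)
    (hM : IsIndMatching (etensor (⊤ : SimpleGraph L) X) a b) :
    IsIndMatching X (fun i => (a i).2) (fun i => (b i).2) ∧
    (∀ i j, i ≠ j → (a i).2 ≠ (a j).2 ∧ (a i).2 ≠ (b j).2 ∧ (b i).2 ≠ (b j).2) := by
  have key : ∀ p q : L × V, (etensor (⊤ : SimpleGraph L) X).Adj p q ↔ X.Adj p.2 q.2 := by
    intro p q
    constructor
    · exact fun h => h.2
    · intro h
      refine ⟨?_, h⟩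
      by_cases hl : p.1 = q.1
      · exact Or.inr hl
      · exact Or.inl hl
  obtain ⟨hadj, hind⟩ := hM
  have hadj' : ∀ i, X.Adj (a i).2 (b i).2 := fun i => (key _ _).1 (hadj i)
  have hnaa : ∀ i j, i ≠ j → ¬ X.Adj (a i).2 (a j).2 :=
    fun i j hij h => (hind i j hij).1 ((key _ _).2 h)
  have hnab : ∀ i j, i ≠ j → ¬ X.Adj (a i).2 (b j).2 :=
    fun i j hij h => (hind i j hij).2.1 ((key _ _).2 h)
  have hnbb : ∀ i j, i ≠ j → ¬ X.Adj (b i).2 (b j).2 :=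
    fun i j hij h => (hind i j hij).2.2 ((key _ _).2 h)
  refine ⟨⟨hadj', fun i j hij => ⟨hnaa i j hij, hnab i j hij, hnbb i j hij⟩⟩, ?_⟩
  intro i j hij
  refine ⟨?_, ?_, ?_⟩
  · intro h
    exact hnab i j hij (h ▸ hadj' j)
  · intro h
    exact hnaa i j hij (h ▸ (hadj' j).symm)
  · intro h
    exact hnab j i hij.symm (h ▸ hadj' j)
end

section
/- For any graph G, any total order σ on V(G × K_2), and any σ-semi-induced matching M of G ×_e K_2, the set M₂ = M ∩ {(u,1)(u,2) : u ∈ V(G)} of 'diagonal' edges projects to an independent set in G; hence |M₂| ≤ α(G). -/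
open SimpleGraph

noncomputable def indepNumG {V : Type*} (G : SimpleGraph V) : ℕ :=
  sSup {n | ∃ s : Finset V, s.card = n ∧ ∀ u ∈ s, ∀ v ∈ s, ¬ G.Adj u v}

lemma etensor_adj_one {V : Type*} (G : SimpleGraph V) (p q r : V × Fin 2)
    (hq : G.Adj p.1 q.1) (hr : G.Adj p.1 r.1) (hqr : q.2 ≠ r.2) :
    (etensor G (⊤ : SimpleGraph (Fin 2))).Adj p q ∨
    (etensor G (⊤ : SimpleGraph (Fin 2))).Adj p r := by
  by_cases h : p.2 = q.2
  · right; exact ⟨Or.inl hr, by simp [h ▸ hqr]⟩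
  · left; exact ⟨Or.inl hq, by simp [h]⟩

lemma min_case {V : Type*} (G : SimpleGraph V) (σ : V × Fin 2 → ℕ)
    (u u' v v' : V × Fin 2)
    (h1 : SemiCond (etensor G (⊤ : SimpleGraph (Fin 2))) σ u u' v v')
    (h2 : SemiCond (etensor G (⊤ : SimpleGraph (Fin 2))) σ u u' v' v)
    (hu' : σ u < σ u') (hv : σ u < σ v) (hv' : σ u < σ v')
    (hvv' : σ v ≠ σ v')
    (hadj : (etensor G (⊤ : SimpleGraph (Fin 2))).Adj u v ∨
            (etensor G (⊤ : SimpleGraph (Fin 2))).Adj u v') : False := by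
  rcases lt_or_gt_of_ne hvv' with h | h
  · obtain ⟨c1, c2⟩ := h1 hu' hv h
    exact hadj.elim c1 c2
  · obtain ⟨c1, c2⟩ := h2 hu' hv' h
    exact hadj.elim c2 c1

theorem stmt18 {V : Type*} [Fintype V] (G : SimpleGraph V) (σ : V × Fin 2 → ℕ)
    (hσ : Function.Injective σ) (n : ℕ) (a b : Fin n → V × Fin 2)
    (hM : IsSemiIndMatching (etensor G (⊤ : SimpleGraph (Fin 2))) σ a b) :
    (∀ i j, i ≠ j → (a i).1 = (b i).1 → (a j).1 = (b j).1 →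
      (a i).1 ≠ (a j).1 ∧ ¬ G.Adj (a i).1 (a j).1) ∧
    Nat.card {i : Fin n // (a i).1 = (b i).1} ≤ indepNumG G := by

  obtain ⟨hadj, hdist, hsemi⟩ := hM
  have key : ∀ i j, i ≠ j → (a i).1 = (b i).1 → (a j).1 = (b j).1 →
      (a i).1 ≠ (a j).1 ∧ ¬ G.Adj (a i).1 (a j).1 := by
    intro i j hij hi hj
    have h2i : (a i).2 ≠ (b i).2 := (hadj i).2.ne
    have h2j : (a j).2 ≠ (b j).2 := (hadj j).2.ne
    obtain ⟨d1, d2, d3⟩ := hdist i j hij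
    have d4 : b i ≠ a j := fun h => d2 (by
      have := hdist j i hij.symm
      exact absurd h.symm this.2.1)
    constructor
    · intro h
      -- second coords: (a i).2 equals (a j).2 or (b j).2
      have : (a i).2 = (a j).2 ∨ (a i).2 = (b j).2 := by
        have := h2j; omega
      rcases this with h2 | h2
      · exact d1 (Prod.ext h h2)
      · exact d2 (Prod.ext (h.trans hj) h2)
    · intro hG
      have hG' : G.Adj (a i).1 (b j).1 := hj ▸ hG
      have hGbi : G.Adj (b i).1 (a j).1 := hi ▸ hG
      have hGbi' : G.Adj (b i).1 (b j).1 := hj ▸ hGbi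
      have hGs : G.Adj (a j).1 (a i).1 := hG.symm
      have hGs2 : G.Adj (a j).1 (b i).1 := hGbi.symm
      have hGt : G.Adj (b j).1 (a i).1 := hG'.symm
      have hGt2 : G.Adj (b j).1 (b i).1 := hGbi'.symm
      have nab : a i ≠ b i := (hadj i).ne
      have nab' : a j ≠ b j := (hadj j).ne
      have s12 : σ (a i) ≠ σ (b i) := fun h => nab (hσ h)
      have s34 : σ (a j) ≠ σ (b j) := fun h => nab' (hσ h)
      have s13 : σ (a i) ≠ σ (a j) := fun h => d1 (hσ h)
      have s14 : σ (a i) ≠ σ (b j) := fun h => d2 (hσ h)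
      have s23 : σ (b i) ≠ σ (a j) := fun h => d4 (hσ h)
      have s24 : σ (b i) ≠ σ (b j) := fun h => d3 (hσ h)
      obtain ⟨c1, c2, c3, c4⟩ := hsemi i j hij
      obtain ⟨e1, e2, e3, e4⟩ := hsemi j i hij.symm
      have Ai : _ ∨ _ := etensor_adj_one G (a i) (a j) (b j) hG hG' h2j
      have Bi : _ ∨ _ := etensor_adj_one G (b i) (a j) (b j) hGbi hGbi' h2j
      have Aj : _ ∨ _ := etensor_adj_one G (a j) (a i) (b i) hGs hGs2 h2i
      have Bj : _ ∨ _ := etensor_adj_one G (b j) (a i) (b i) hGt hGt2 h2i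
      -- case on which of the four σ-values is minimal
      rcases lt_or_gt_of_ne s12 with q12 | q12 <;>
        rcases lt_or_gt_of_ne s34 with q34 | q34
      · rcases lt_or_gt_of_ne s13 with q | q
        · exact min_case G σ (a i) (b i) (a j) (b j) c1 c2 q12 q (by omega) s34 Ai
        · exact min_case G σ (a j) (b j) (a i) (b i) e1 e2 q34 q (by omega) s12 Aj
      · rcases lt_or_gt_of_ne s14 with q | q
        · exact min_case G σ (a i) (b i) (a j) (b j) c1 c2 q12 (by omega) q s34 Ai
        · exact min_case G σ (b j) (a j) (a i) (b i) e3 e4 q34 q (by omega) s12 Bj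
      · rcases lt_or_gt_of_ne s23 with q | q
        · exact min_case G σ (b i) (a i) (a j) (b j) c3 c4 q12 q (by omega) s34 Bi
        · exact min_case G σ (a j) (b j) (a i) (b i) e1 e2 q34 (by omega) q s12 Aj
      · rcases lt_or_gt_of_ne s24 with q | q
        · exact min_case G σ (b i) (a i) (a j) (b j) c3 c4 q12 (by omega) q s34 Bi
        · exact min_case G σ (b j) (a j) (a i) (b i) e3 e4 q34 (by omega) q s12 Bj
  refine ⟨key, ?_⟩
  classical
  set D : Finset (Fin n) := Finset.univ.filter (fun i => (a i).1 = (b i).1) with hD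
  have hcard : Nat.card {i : Fin n // (a i).1 = (b i).1} = D.card := by
    rw [Nat.card_eq_fintype_card, Fintype.card_subtype]
  set S : Finset V := D.image (fun i => (a i).1) with hS
  have hinj : S.card = D.card := by
    apply Finset.card_image_of_injOn
    intro i hi j hj hne
    by_contra hij
    exact (key i j hij (by simpa [hD] using hi) (by simpa [hD] using hj)).1 hne
  have hindep : ∀ u ∈ S, ∀ v ∈ S, ¬ G.Adj u v := by
    intro u hu v hv
    simp only [hS, Finset.mem_image] at hu hv
    obtain ⟨i, hi, rfl⟩ := hu
    obtain ⟨j, hj, rfl⟩ := hv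
    rcases eq_or_ne i j with rfl | hij
    · exact G.loopless.irrefl _
    · exact (key i j hij (by simpa [hD] using hi) (by simpa [hD] using hj)).2
  rw [hcard, ← hinj]
  apply le_csSup
  · refine ⟨Fintype.card V, ?_⟩
    rintro m ⟨s, rfl, -⟩
    exact Finset.card_le_univ s
  · exact ⟨S, rfl, hindep⟩
end

section
/- For any graphs G, H, J and any total order σ on V((G ∨ H) × J), there exist total orders σ₁ on V(G × J) and σ₂ on V(H × J) such that sim_σ((G ∨ H) × J) ≤ sim_{σ₁}(G × J) + sim_{σ₂}(H × J). -/
open SimpleGraph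

lemma simSet_bdd {W : Type*} [Fintype W] (K : SimpleGraph W) (σ : W → ℕ) :
    BddAbove {n | ∃ a b : Fin n → W, IsSemiIndMatching K σ a b} := by
  refine ⟨Fintype.card W, fun n hn => ?_⟩
  obtain ⟨a, b, hm⟩ := hn
  have ha : Function.Injective a := by
    intro i j h
    by_contra hij
    exact (hm.2.1 i j hij).1 h
  simpa using Fintype.card_le_of_injective a ha

lemma key_lemma {V : Type*} (B : SimpleGraph V) (σ : V → ℕ) (hσ : Function.Injective σ)
    {n : ℕ} {a b : Fin n → V} (hm : IsSemiIndMatching B σ a b) {i j : Fin n} (hij : i ≠ j) :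
    ¬ ((B.Adj (a i) (b j) ∧ B.Adj (b i) (a j)) ∨ (B.Adj (a i) (a j) ∧ B.Adj (b i) (b j))) := by
  intro hcase
  have hpq : σ (a i) ≠ σ (b i) := fun h => (hm.1 i).ne (hσ h)
  have hrs : σ (a j) ≠ σ (b j) := fun h => (hm.1 j).ne (hσ h)
  have hpr : σ (a i) ≠ σ (a j) := fun h => (hm.2.1 i j hij).1 (hσ h)
  have hps : σ (a i) ≠ σ (b j) := fun h => (hm.2.1 i j hij).2.1 (hσ h)
  have hqr : σ (b i) ≠ σ (a j) := fun h => (hm.2.1 j i hij.symm).2.1 (hσ h).symm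
  have hqs : σ (b i) ≠ σ (b j) := fun h => (hm.2.1 i j hij).2.2 (hσ h)
  rcases hpq.lt_or_gt with h1 | h1 <;> rcases hrs.lt_or_gt with h2 | h2
  · -- σ a i < σ b i, σ a j < σ b j
    rcases hpr.lt_or_gt with h3 | h3
    · have cond := (hm.2.2 i j hij).1 h1 h3 h2
      rcases hcase with ⟨x, y⟩ | ⟨x, y⟩
      · exact cond.2 x
      · exact cond.1 x
    · have cond := (hm.2.2 j i hij.symm).1 h2 h3 h1
      rcases hcase with ⟨x, y⟩ | ⟨x, y⟩
      · exact cond.2 y.symm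
      · exact cond.1 x.symm
  · -- σ a i < σ b i, σ b j < σ a j
    rcases hps.lt_or_gt with h3 | h3
    · have cond := (hm.2.2 i j hij).2.1 h1 h3 h2
      rcases hcase with ⟨x, y⟩ | ⟨x, y⟩
      · exact cond.1 x
      · exact cond.2 x
    · have cond := (hm.2.2 j i hij.symm).2.2.1 h2 h3 h1
      rcases hcase with ⟨x, y⟩ | ⟨x, y⟩
      · exact cond.1 x.symm
      · exact cond.2 y.symm
  · -- σ b i < σ a i, σ a j < σ b j
    rcases hqr.lt_or_gt with h3 | h3
    · have cond := (hm.2.2 i j hij).2.2.1 h1 h3 h2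
      rcases hcase with ⟨x, y⟩ | ⟨x, y⟩
      · exact cond.1 y
      · exact cond.2 y
    · have cond := (hm.2.2 j i hij.symm).2.1 h2 h3 h1
      rcases hcase with ⟨x, y⟩ | ⟨x, y⟩
      · exact cond.1 y.symm
      · exact cond.2 x.symm
  · -- σ b i < σ a i, σ b j < σ a j
    rcases hqs.lt_or_gt with h3 | h3
    · have cond := (hm.2.2 i j hij).2.2.2 h1 h3 h2
      rcases hcase with ⟨x, y⟩ | ⟨x, y⟩
      · exact cond.2 y
      · exact cond.1 y
    · have cond := (hm.2.2 j i hij.symm).2.2.2 h2 h3 h1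
      rcases hcase with ⟨x, y⟩ | ⟨x, y⟩
      · exact cond.2 x.symm
      · exact cond.1 y.symm

lemma proj_lemma {V W : Type*} [Fintype V] [Fintype W]
    (B : SimpleGraph V) (K : SimpleGraph W)
    (σ : V → ℕ) (hσ : Function.Injective σ) (π : V → W)
    (hhom : ∀ x y, K.Adj (π x) (π y) → B.Adj x y)
    {n : ℕ} (a b : Fin n → V) (hm : IsSemiIndMatching B σ a b)
    (S : Finset (Fin n))
    (hS : ∀ i ∈ S, K.Adj (π (a i)) (π (b i)))
    (hcaa : ∀ i ∈ S, ∀ j ∈ S, i ≠ j → π (a i) = π (a j) →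
      B.Adj (a i) (b j) ∧ B.Adj (b i) (a j))
    (hcab : ∀ i ∈ S, ∀ j ∈ S, i ≠ j → π (a i) = π (b j) →
      B.Adj (a i) (a j) ∧ B.Adj (b i) (b j))
    (hcbb : ∀ i ∈ S, ∀ j ∈ S, i ≠ j → π (b i) = π (b j) →
      B.Adj (a i) (b j) ∧ B.Adj (b i) (a j)) :
    ∃ σ' : W → ℕ, Function.Injective σ' ∧ S.card ≤ simNumOrd K σ' := by
  classical
  set E : Finset V := S.image a ∪ S.image b with hE
  have hmemE : ∀ x ∈ E, (∃ i ∈ S, a i = x) ∨ (∃ i ∈ S, b i = x) := by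
    intro x hx
    rcases Finset.mem_union.mp hx with h | h
    · exact Or.inl (Finset.mem_image.mp h)
    · exact Or.inr (Finset.mem_image.mp h)
  have haE : ∀ i ∈ S, a i ∈ E := fun i hi =>
    Finset.mem_union_left _ (Finset.mem_image_of_mem a hi)
  have hbE : ∀ i ∈ S, b i ∈ E := fun i hi =>
    Finset.mem_union_right _ (Finset.mem_image_of_mem b hi)
  -- π is injective on E
  have Einj : ∀ x ∈ E, ∀ y ∈ E, π x = π y → x = y := by
    intro x hx y hy hπ
    rcases hmemE x hx with ⟨i, hi, rfl⟩ | ⟨i, hi, rfl⟩ <;>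
      rcases hmemE y hy with ⟨j, hj, rfl⟩ | ⟨j, hj, rfl⟩
    · by_cases hij : i = j
      · subst hij; rfl
      · exact absurd (Or.inl (hcaa i hi j hj hij hπ)) (key_lemma B σ hσ hm hij)
    · by_cases hij : i = j
      · subst hij; exact absurd (hπ ▸ hS i hi) (K.loopless.irrefl _)
      · exact absurd (Or.inr (hcab i hi j hj hij hπ)) (key_lemma B σ hσ hm hij)
    · by_cases hij : i = j
      · subst hij; exact absurd (hπ ▸ hS i hi) (K.loopless.irrefl _)
      · exact absurd (Or.inr (hcab j hj i hi (Ne.symm hij) hπ.symm))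
          (key_lemma B σ hσ hm (Ne.symm hij))
    · by_cases hij : i = j
      · subst hij; rfl
      · exact absurd (Or.inl (hcbb i hi j hj hij hπ)) (key_lemma B σ hσ hm hij)
  let g : W → ℕ := fun w => ((Fintype.equivFin W) w : ℕ)
  have hg : Function.Injective g := fun w w' h =>
    (Fintype.equivFin W).injective (Fin.ext h)
  let σ' : W → ℕ := fun w =>
    if h : ∃ x, x ∈ E ∧ π x = w then 2 * σ h.choose else 2 * g w + 1
  have hσ'E : ∀ x ∈ E, σ' (π x) = 2 * σ x := by
    intro x hx
    have h : ∃ y, y ∈ E ∧ π y = π x := ⟨x, hx, rfl⟩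
    have hc := h.choose_spec
    have : h.choose = x := Einj _ hc.1 _ hx hc.2
    simp only [σ', dif_pos h, this]
  have hσ'inj : Function.Injective σ' := by
    intro w w' hww
    by_cases h1 : ∃ x, x ∈ E ∧ π x = w <;> by_cases h2 : ∃ x, x ∈ E ∧ π x = w'
    · rw [show σ' w = 2 * σ h1.choose from dif_pos h1,
        show σ' w' = 2 * σ h2.choose from dif_pos h2] at hww
      have : h1.choose = h2.choose := hσ (by omega)
      rw [← h1.choose_spec.2, ← h2.choose_spec.2, this]
    · rw [show σ' w = 2 * σ h1.choose from dif_pos h1,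
        show σ' w' = 2 * g w' + 1 from dif_neg h2] at hww
      omega
    · rw [show σ' w = 2 * g w + 1 from dif_neg h1,
        show σ' w' = 2 * σ h2.choose from dif_pos h2] at hww
      omega
    · rw [show σ' w = 2 * g w + 1 from dif_neg h1,
        show σ' w' = 2 * g w' + 1 from dif_neg h2] at hww
      exact hg (by omega)
  refine ⟨σ', hσ'inj, ?_⟩
  -- build the matching in K
  let f : Fin S.card → Fin n := fun k => (S.equivFin.symm k : Fin n)
  have hfS : ∀ k, f k ∈ S := fun k => (S.equivFin.symm k).2
  have hfinj : Function.Injective f := fun k l h =>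
    S.equivFin.symm.injective (Subtype.ext h)
  let a' : Fin S.card → W := fun k => π (a (f k))
  let b' : Fin S.card → W := fun k => π (b (f k))
  have hmatch : IsSemiIndMatching K σ' a' b' := by
    refine ⟨fun k => hS (f k) (hfS k), ?_, ?_⟩
    · intro k l hkl
      have hij : f k ≠ f l := fun h => hkl (hfinj h)
      refine ⟨?_, ?_, ?_⟩
      · intro h
        exact (key_lemma B σ hσ hm hij)
          (Or.inl (hcaa _ (hfS k) _ (hfS l) hij h))
      · intro h
        exact (key_lemma B σ hσ hm hij)
          (Or.inr (hcab _ (hfS k) _ (hfS l) hij h))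
      · intro h
        exact (key_lemma B σ hσ hm hij)
          (Or.inl (hcbb _ (hfS k) _ (hfS l) hij h))
    · intro k l hkl
      have hij : f k ≠ f l := fun h => hkl (hfinj h)
      have hcond := hm.2.2 (f k) (f l) hij
      have eaI := hσ'E _ (haE _ (hfS k))
      have ebI := hσ'E _ (hbE _ (hfS k))
      have eaJ := hσ'E _ (haE _ (hfS l))
      have ebJ := hσ'E _ (hbE _ (hfS l))
      refine ⟨?_, ?_, ?_, ?_⟩
      · intro p1 p2 p3
        rw [eaI, ebI] at p1; rw [eaI, eaJ] at p2; rw [eaJ, ebJ] at p3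
        have c := hcond.1 (by omega) (by omega) (by omega)
        exact ⟨fun h => c.1 (hhom _ _ h), fun h => c.2 (hhom _ _ h)⟩
      · intro p1 p2 p3
        rw [eaI, ebI] at p1; rw [eaI, ebJ] at p2; rw [eaJ, ebJ] at p3
        have c := hcond.2.1 (by omega) (by omega) (by omega)
        exact ⟨fun h => c.1 (hhom _ _ h), fun h => c.2 (hhom _ _ h)⟩
      · intro p1 p2 p3
        rw [eaI, ebI] at p1; rw [ebI, eaJ] at p2; rw [eaJ, ebJ] at p3
        have c := hcond.2.2.1 (by omega) (by omega) (by omega)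
        exact ⟨fun h => c.1 (hhom _ _ h), fun h => c.2 (hhom _ _ h)⟩
      · intro p1 p2 p3
        rw [eaI, ebI] at p1; rw [ebI, ebJ] at p2; rw [eaJ, ebJ] at p3
        have c := hcond.2.2.2 (by omega) (by omega) (by omega)
        exact ⟨fun h => c.1 (hhom _ _ h), fun h => c.2 (hhom _ _ h)⟩
  exact le_csSup (simSet_bdd K σ') ⟨a', b', hmatch⟩

theorem stmt19 {α β γ : Type*} [Fintype α] [Fintype β] [Fintype γ]
    (G : SimpleGraph α) (H : SimpleGraph β) (J : SimpleGraph γ)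
    (σ : (α × β) × γ → ℕ) (hσ : Function.Injective σ) :
    ∃ (σ₁ : α × γ → ℕ) (σ₂ : β × γ → ℕ),
      Function.Injective σ₁ ∧ Function.Injective σ₂ ∧
      simNumOrd (tensor (disj G H) J) σ ≤
        simNumOrd (tensor G J) σ₁ + simNumOrd (tensor H J) σ₂ := by
  classical
  set B := tensor (disj G H) J with hB
  have hne : {n | ∃ a b : Fin n → (α × β) × γ, IsSemiIndMatching B σ a b}.Nonempty :=
    ⟨0, Fin.elim0, Fin.elim0, fun i => i.elim0, fun i => i.elim0, fun i => i.elim0⟩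
  have hNmem := Nat.sSup_mem hne (simSet_bdd B σ)
  obtain ⟨a, b, hm⟩ := hNmem
  set N := simNumOrd B σ with hN
  set S : Finset (Fin N) := Finset.univ.filter (fun i => G.Adj (a i).1.1 (b i).1.1) with hSdef
  have hSmem : ∀ i, i ∈ S ↔ G.Adj (a i).1.1 (b i).1.1 := by
    intro i; simp [hSdef]
  have hScmem : ∀ i, i ∈ Sᶜ → H.Adj (a i).1.2 (b i).1.2 := by
    intro i hi
    have hnG : ¬ G.Adj (a i).1.1 (b i).1.1 := by
      intro h; exact (Finset.mem_compl.mp hi) ((hSmem i).mpr h)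
    rcases (hm.1 i).1 with h | h
    · exact absurd h hnG
    · exact h
  have hJ : ∀ i, J.Adj (a i).2 (b i).2 := fun i => (hm.1 i).2
  -- G side
  obtain ⟨σ₁, hσ₁, h1⟩ :=
    proj_lemma B (tensor G J) σ hσ (fun x => (x.1.1, x.2))
      (fun x y h => ⟨Or.inl h.1, h.2⟩) a b hm S
      (fun i hi => ⟨(hSmem i).mp hi, hJ i⟩)
      (by
        intro i hi j hj hij hπ
        have e1 : (a i).1.1 = (a j).1.1 := by simpa using congrArg Prod.fst hπ
        have e2 : (a i).2 = (a j).2 := by simpa using congrArg Prod.snd hπ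
        exact ⟨⟨Or.inl (e1 ▸ (hSmem j).mp hj), e2 ▸ hJ j⟩,
          ⟨Or.inl (e1 ▸ ((hSmem i).mp hi).symm), e2 ▸ (hJ i).symm⟩⟩)
      (by
        intro i hi j hj hij hπ
        have e1 : (a i).1.1 = (b j).1.1 := by simpa using congrArg Prod.fst hπ
        have e2 : (a i).2 = (b j).2 := by simpa using congrArg Prod.snd hπ
        exact ⟨⟨Or.inl (e1 ▸ ((hSmem j).mp hj).symm), e2 ▸ (hJ j).symm⟩,
          ⟨Or.inl (e1 ▸ ((hSmem i).mp hi).symm), e2 ▸ (hJ i).symm⟩⟩)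
      (by
        intro i hi j hj hij hπ
        have e1 : (b i).1.1 = (b j).1.1 := by simpa using congrArg Prod.fst hπ
        have e2 : (b i).2 = (b j).2 := by simpa using congrArg Prod.snd hπ
        exact ⟨⟨Or.inl (e1 ▸ (hSmem i).mp hi), e2 ▸ hJ i⟩,
          ⟨Or.inl (e1.symm ▸ ((hSmem j).mp hj).symm), e2.symm ▸ (hJ j).symm⟩⟩)
  -- H side
  obtain ⟨σ₂, hσ₂, h2⟩ :=
    proj_lemma B (tensor H J) σ hσ (fun x => (x.1.2, x.2))
      (fun x y h => ⟨Or.inr h.1, h.2⟩) a b hm Sᶜ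
      (fun i hi => ⟨hScmem i hi, hJ i⟩)
      (by
        intro i hi j hj hij hπ
        have e1 : (a i).1.2 = (a j).1.2 := by simpa using congrArg Prod.fst hπ
        have e2 : (a i).2 = (a j).2 := by simpa using congrArg Prod.snd hπ
        exact ⟨⟨Or.inr (e1 ▸ hScmem j hj), e2 ▸ hJ j⟩,
          ⟨Or.inr (e1 ▸ (hScmem i hi).symm), e2 ▸ (hJ i).symm⟩⟩)
      (by
        intro i hi j hj hij hπ
        have e1 : (a i).1.2 = (b j).1.2 := by simpa using congrArg Prod.fst hπ
        have e2 : (a i).2 = (b j).2 := by simpa using congrArg Prod.snd hπ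
        exact ⟨⟨Or.inr (e1 ▸ (hScmem j hj).symm), e2 ▸ (hJ j).symm⟩,
          ⟨Or.inr (e1 ▸ (hScmem i hi).symm), e2 ▸ (hJ i).symm⟩⟩)
      (by
        intro i hi j hj hij hπ
        have e1 : (b i).1.2 = (b j).1.2 := by simpa using congrArg Prod.fst hπ
        have e2 : (b i).2 = (b j).2 := by simpa using congrArg Prod.snd hπ
        exact ⟨⟨Or.inr (e1 ▸ hScmem i hi), e2 ▸ hJ i⟩,
          ⟨Or.inr (e1.symm ▸ (hScmem j hj).symm), e2.symm ▸ (hJ j).symm⟩⟩)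
  refine ⟨σ₁, σ₂, hσ₁, hσ₂, ?_⟩
  have hcard : S.card + Sᶜ.card = N := by
    rw [Finset.card_add_card_compl]; simp
  exact le_trans hcard.symm.le (Nat.add_le_add h1 h2)
end
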